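/- Data-free upper bound: Let X ∈ ℝ^{N×d} have rank r_d, largest singular value σ₁(X), and right singular vectors V_d ∈ ℝ^{d×r_d}. Let V̂ ∈ ℝ^{d×r_v} have orthonormal columns (r_v ≥ r_d) and suppose 1 − (1/r_d)‖V̂ᵀV_d‖_F² ≤ ζ². Then for any matrices ρ, τ ∈ ℝ^{m×d}: ‖(ρ − τ)Xᵀ‖_F² ≤ 2σ₁(X)² ( ‖(ρ − τ)V̂‖_F² + r_d ζ² ‖ρ − τ‖₂² ). -/

import Mathlib

open Matrix

/-- Squared Frobenius norm of a real matrix. -/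
noncomputable def frobSq {m n : ℕ} (A : Matrix (Fin m) (Fin n) ℝ) : ℝ :=
  ∑ i, ∑ j, (A i j)^2

/-- Frobenius norm of a real matrix. -/
noncomputable def frob {m n : ℕ} (A : Matrix (Fin m) (Fin n) ℝ) : ℝ :=
  Real.sqrt (frobSq A)

/-- Operator (spectral) norm of a real matrix, as the norm of the induced
linear map between Euclidean spaces. -/
noncomputable def opNorm {m n : ℕ} (A : Matrix (Fin m) (Fin n) ℝ) : ℝ :=
  ‖LinearMap.toContinuousLinearMap (Matrix.toEuclideanLin A)‖

/-- The `j`-th largest singular value of a real matrix (`j` zero-indexed):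
the square roots of the eigenvalues of `Aᴴ * A`, sorted in decreasing order. -/
noncomputable def singularValue {m n : ℕ} (A : Matrix (Fin m) (Fin n) ℝ) (j : Fin n) : ℝ :=
  let μ : Fin n → ℝ := fun i =>
    Real.sqrt ((Matrix.isHermitian_conjTranspose_mul_self A).eigenvalues i)
  μ (Tuple.sort μ j.rev)

lemma frobSq_nonneg {m n : ℕ} (A : Matrix (Fin m) (Fin n) ℝ) : 0 ≤ frobSq A := by
  apply Finset.sum_nonneg; intro i _; apply Finset.sum_nonneg; intro j _; positivity

lemma opNorm_nonneg {m n : ℕ} (A : Matrix (Fin m) (Fin n) ℝ) : 0 ≤ opNorm A :=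
  norm_nonneg _

lemma mulVec_sq_le {m n : ℕ} (A : Matrix (Fin m) (Fin n) ℝ) (v : Fin n → ℝ) :
    ∑ i, (A.mulVec v i)^2 ≤ opNorm A ^ 2 * ∑ j, (v j)^2 := by
  set L := LinearMap.toContinuousLinearMap (Matrix.toEuclideanLin A)
  set x : EuclideanSpace ℝ (Fin n) := (WithLp.equiv 2 (Fin n → ℝ)).symm v
  have h1 : ‖L x‖ ≤ ‖L‖ * ‖x‖ := L.le_opNorm x
  have h2 : ‖L x‖^2 = ∑ i, (A.mulVec v i)^2 := by
    rw [EuclideanSpace.norm_eq, Real.sq_sqrt (by positivity)]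
    simp [L, x, Matrix.toEuclideanLin_apply, sq_abs]
  have h3 : ‖x‖^2 = ∑ j, (v j)^2 := by
    rw [EuclideanSpace.norm_eq, Real.sq_sqrt (by positivity)]
    simp [x, sq_abs]
  calc ∑ i, (A.mulVec v i)^2 = ‖L x‖^2 := h2.symm
    _ ≤ (‖L‖ * ‖x‖)^2 := by
        apply sq_le_sq' _ h1; nlinarith [norm_nonneg (L x), norm_nonneg x, norm_nonneg L]
    _ = opNorm A ^ 2 * ∑ j, (v j)^2 := by rw [mul_pow, h3]; rfl

lemma frobSq_mul_le {m n p : ℕ} (A : Matrix (Fin m) (Fin n) ℝ) (B : Matrix (Fin n) (Fin p) ℝ) :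
    frobSq (A * B) ≤ opNorm A ^ 2 * frobSq B := by
  unfold frobSq
  rw [Finset.sum_comm]
  calc ∑ j, ∑ i, ((A * B) i j)^2 ≤ ∑ j : Fin p, opNorm A ^ 2 * ∑ i, (B i j)^2 := by
        apply Finset.sum_le_sum; intro j _
        have := mulVec_sq_le A (fun i => B i j)
        simpa [Matrix.mul_apply, Matrix.mulVec, dotProduct] using this
    _ = opNorm A ^ 2 * ∑ i, ∑ j, (B i j)^2 := by
        rw [← Finset.mul_sum, Finset.sum_comm]

lemma frobSq_transpose {m n : ℕ} (A : Matrix (Fin m) (Fin n) ℝ) : frobSq Aᵀ = frobSq A := by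
  unfold frobSq; rw [Finset.sum_comm]; rfl

lemma frobSq_mul_transpose_le {m n p : ℕ} (A : Matrix (Fin m) (Fin n) ℝ)
    (B : Matrix (Fin p) (Fin n) ℝ) :
    frobSq (A * Bᵀ) ≤ opNorm B ^ 2 * frobSq A := by
  rw [← frobSq_transpose (A * Bᵀ), Matrix.transpose_mul, Matrix.transpose_transpose,
    ← frobSq_transpose A]
  exact frobSq_mul_le B Aᵀ

lemma mulVec_isometry {n p : ℕ} (V : Matrix (Fin n) (Fin p) ℝ) (hV : Vᵀ * V = 1)
    (v : Fin p → ℝ) : ∑ i, (V.mulVec v i)^2 = ∑ j, (v j)^2 := by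
  have h1 : ∑ i, (V.mulVec v i)^2 = (V *ᵥ v) ⬝ᵥ (V *ᵥ v) := by
    simp [dotProduct, sq]
  have h2 : v ⬝ᵥ ((Vᵀ * V) *ᵥ v) = (V *ᵥ v) ⬝ᵥ (V *ᵥ v) := by
    rw [← Matrix.mulVec_mulVec, Matrix.dotProduct_mulVec, Matrix.vecMul_transpose]
  rw [h1, ← h2, hV]
  simp [dotProduct, sq]

lemma opNorm_mul_orthonormal_le {m n p : ℕ} (X : Matrix (Fin m) (Fin n) ℝ)
    (V : Matrix (Fin n) (Fin p) ℝ) (hV : Vᵀ * V = 1) :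
    opNorm (X * V) ≤ opNorm X := by
  apply ContinuousLinearMap.opNorm_le_bound _ (opNorm_nonneg X)
  intro x
  have hXle := (LinearMap.toContinuousLinearMap (Matrix.toEuclideanLin X)).le_opNorm
    ((WithLp.equiv 2 (Fin n → ℝ)).symm (V.mulVec ((WithLp.equiv 2 (Fin p → ℝ)) x)))
  have e1 : ‖LinearMap.toContinuousLinearMap (Matrix.toEuclideanLin (X * V)) x‖
      = ‖LinearMap.toContinuousLinearMap (Matrix.toEuclideanLin X)
          ((WithLp.equiv 2 (Fin n → ℝ)).symm (V.mulVec ((WithLp.equiv 2 (Fin p → ℝ)) x)))‖ := by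
    congr 1
    simp [Matrix.toEuclideanLin_apply, Matrix.mulVec_mulVec]
  have e2 : ‖(WithLp.equiv 2 (Fin n → ℝ)).symm (V.mulVec ((WithLp.equiv 2 (Fin p → ℝ)) x))‖
      = ‖x‖ := by
    rw [EuclideanSpace.norm_eq, EuclideanSpace.norm_eq]
    congr 1
    have := mulVec_isometry V hV ((WithLp.equiv 2 (Fin p → ℝ)) x)
    simpa [sq_abs, sq] using this
  rw [e1, ← e2]
  exact hXle

lemma frobSq_eq_trace {m n : ℕ} (A : Matrix (Fin m) (Fin n) ℝ) :
    frobSq A = Matrix.trace (Aᵀ * A) := by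
  unfold frobSq
  rw [Matrix.trace, Finset.sum_comm]
  simp [Matrix.diag, Matrix.mul_apply, sq]

lemma residual_frobSq {d rd rv : ℕ} (Vd : Matrix (Fin d) (Fin rd) ℝ)
    (Vh : Matrix (Fin d) (Fin rv) ℝ) (hVd : Vdᵀ * Vd = 1) (hVh : Vhᵀ * Vh = 1) :
    frobSq ((1 - Vh * Vhᵀ) * Vd) = (rd : ℝ) - frobSq (Vhᵀ * Vd) := by
  have hPsymm : (Vh * Vhᵀ)ᵀ = Vh * Vhᵀ := by
    rw [Matrix.transpose_mul, Matrix.transpose_transpose]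
  have hPP : (Vh * Vhᵀ) * (Vh * Vhᵀ) = Vh * Vhᵀ := by
    rw [Matrix.mul_assoc, ← Matrix.mul_assoc Vhᵀ, hVh, Matrix.one_mul]
  have ht : (1 - Vh * Vhᵀ)ᵀ = 1 - Vh * Vhᵀ := by
    rw [Matrix.transpose_sub, Matrix.transpose_one, hPsymm]
  have h2 : (1 - Vh * Vhᵀ) * (1 - Vh * Vhᵀ) = 1 - Vh * Vhᵀ := by
    simp only [Matrix.sub_mul, Matrix.mul_sub, Matrix.one_mul, Matrix.mul_one, hPP]
    abel
  have hM : ((1 - Vh * Vhᵀ) * Vd)ᵀ * ((1 - Vh * Vhᵀ) * Vd)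
      = 1 - (Vhᵀ * Vd)ᵀ * (Vhᵀ * Vd) := by
    calc ((1 - Vh * Vhᵀ) * Vd)ᵀ * ((1 - Vh * Vhᵀ) * Vd)
        = Vdᵀ * (((1 - Vh * Vhᵀ) * (1 - Vh * Vhᵀ)) * Vd) := by
          rw [Matrix.transpose_mul, ht, Matrix.mul_assoc, Matrix.mul_assoc]
      _ = Vdᵀ * Vd - Vdᵀ * Vh * (Vhᵀ * Vd) := by
          rw [h2, Matrix.sub_mul, Matrix.one_mul, Matrix.mul_sub,
            Matrix.mul_assoc Vh, ← Matrix.mul_assoc Vdᵀ, ← Matrix.mul_assoc]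
      _ = 1 - (Vhᵀ * Vd)ᵀ * (Vhᵀ * Vd) := by
          rw [hVd, Matrix.transpose_mul, Matrix.transpose_transpose]
  rw [frobSq_eq_trace, hM, Matrix.trace_sub, Matrix.trace_one, ← frobSq_eq_trace]
  simp

lemma frobSq_add_le {m n : ℕ} (A B : Matrix (Fin m) (Fin n) ℝ) :
    frobSq (A + B) ≤ 2 * frobSq A + 2 * frobSq B := by
  unfold frobSq
  have h : ∀ i j, ((A + B) i j)^2 ≤ 2*(A i j)^2 + 2*(B i j)^2 := by
    intro i j; simp only [Matrix.add_apply]; nlinarith [sq_nonneg (A i j - B i j)]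
  calc ∑ i, ∑ j, ((A + B) i j)^2
      ≤ ∑ i, ∑ j, (2*(A i j)^2 + 2*(B i j)^2) := by
        apply Finset.sum_le_sum; intro i _; apply Finset.sum_le_sum; intro j _; exact h i j
    _ = 2 * (∑ i, ∑ j, (A i j)^2) + 2 * (∑ i, ∑ j, (B i j)^2) := by
        simp only [Finset.sum_add_distrib, Finset.mul_sum]


/-- Data-free upper bound: if X has rank r_d with orthonormal right singular vectors V_d
spanning its row space, V̂ has orthonormal columns with r_v ≥ r_d, and
1 − (1/r_d)‖V̂ᵀV_d‖_F² ≤ ζ², then for any ρ, τ: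
‖(ρ − τ)Xᵀ‖_F² ≤ 2σ₁(X)²(‖(ρ − τ)V̂‖_F² + r_d ζ² ‖ρ − τ‖₂²). -/
theorem data_free_upper_bound {N d rd rv m : ℕ}
    (X : Matrix (Fin N) (Fin d) ℝ) (Vd : Matrix (Fin d) (Fin rd) ℝ)
    (Vh : Matrix (Fin d) (Fin rv) ℝ) (ζ : ℝ)
    (hrank : X.rank = rd) (hVd : Vdᵀ * Vd = 1) (hXVd : X * (Vd * Vdᵀ) = X)
    (hVh : Vhᵀ * Vh = 1) (hr : rd ≤ rv)
    (hζ : 1 - (1 / (rd : ℝ)) * frobSq (Vhᵀ * Vd) ≤ ζ^2)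
    (ρ τ : Matrix (Fin m) (Fin d) ℝ) :
    frobSq ((ρ - τ) * Xᵀ)
      ≤ 2 * (opNorm X)^2
          * (frobSq ((ρ - τ) * Vh) + (rd : ℝ) * ζ^2 * (opNorm (ρ - τ))^2) := by
  set Δ := ρ - τ with hΔ
  set P := Vh * Vhᵀ with hP
  set M2 := (1 - P) * Vd with hM2
  have hXt : Vd * (Vdᵀ * Xᵀ) = Xᵀ := by
    have h := congrArg Matrix.transpose hXVd
    rw [Matrix.transpose_mul, Matrix.transpose_mul, Matrix.transpose_transpose] at h
    rw [← Matrix.mul_assoc]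
    exact h
  have hsplit : Δ * Xᵀ = (Δ * Vh) * (X * Vh)ᵀ + (Δ * M2) * (X * Vd)ᵀ := by
    rw [Matrix.transpose_mul, Matrix.transpose_mul]
    calc Δ * Xᵀ = Δ * ((P + (1 - P)) * Xᵀ) := by
          rw [add_sub_cancel, Matrix.one_mul]
      _ = Δ * (P * Xᵀ) + Δ * ((1 - P) * Xᵀ) := by
          rw [Matrix.add_mul, Matrix.mul_add]
      _ = Δ * Vh * (Vhᵀ * Xᵀ) + Δ * M2 * (Vdᵀ * Xᵀ) := by
        congr 1
        · symm
          rw [Matrix.mul_assoc Δ Vh, ← Matrix.mul_assoc Vh, ← hP]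
        · symm
          rw [hM2, Matrix.mul_assoc Δ, Matrix.mul_assoc (1 - P), hXt]
  have hb1 : frobSq ((Δ * Vh) * (X * Vh)ᵀ) ≤ opNorm X ^ 2 * frobSq (Δ * Vh) := by
    refine le_trans (frobSq_mul_transpose_le _ _) ?_
    apply mul_le_mul_of_nonneg_right _ (frobSq_nonneg _)
    exact pow_le_pow_left₀ (opNorm_nonneg _) (opNorm_mul_orthonormal_le X Vh hVh) 2
  have hres : frobSq M2 ≤ (rd : ℝ) * ζ^2 := by
    rw [hM2, residual_frobSq Vd Vh hVd hVh]
    rcases Nat.eq_zero_or_pos rd with h0 | hpos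
    · subst h0
      have h0' : frobSq (Vhᵀ * Vd) = 0 := by unfold frobSq; simp
      rw [h0']
      norm_num
    · have hrd : (0:ℝ) < rd := by exact_mod_cast hpos
      have hF : (rd:ℝ) * ((1/(rd:ℝ)) * frobSq (Vhᵀ * Vd)) = frobSq (Vhᵀ * Vd) := by
        field_simp
      nlinarith [mul_le_mul_of_nonneg_left hζ (le_of_lt hrd)]
  have hb2 : frobSq ((Δ * M2) * (X * Vd)ᵀ)
      ≤ opNorm X ^ 2 * (opNorm Δ ^ 2 * ((rd : ℝ) * ζ^2)) := by
    refine le_trans (frobSq_mul_transpose_le _ _) ?_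
    have h1 : frobSq (Δ * M2) ≤ opNorm Δ ^ 2 * ((rd : ℝ) * ζ^2) :=
      le_trans (frobSq_mul_le Δ M2)
        (mul_le_mul_of_nonneg_left hres (by positivity))
    calc opNorm (X * Vd) ^ 2 * frobSq (Δ * M2)
        ≤ opNorm X ^ 2 * frobSq (Δ * M2) := by
          apply mul_le_mul_of_nonneg_right _ (frobSq_nonneg _)
          exact pow_le_pow_left₀ (opNorm_nonneg _) (opNorm_mul_orthonormal_le X Vd hVd) 2
      _ ≤ opNorm X ^ 2 * (opNorm Δ ^ 2 * ((rd : ℝ) * ζ^2)) :=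
          mul_le_mul_of_nonneg_left h1 (by positivity)
  calc frobSq (Δ * Xᵀ)
      ≤ 2 * frobSq ((Δ * Vh) * (X * Vh)ᵀ) + 2 * frobSq ((Δ * M2) * (X * Vd)ᵀ) := by
        rw [hsplit]; exact frobSq_add_le _ _
    _ ≤ 2 * (opNorm X ^ 2 * frobSq (Δ * Vh))
        + 2 * (opNorm X ^ 2 * (opNorm Δ ^ 2 * ((rd : ℝ) * ζ^2))) := by
        linarith
    _ = 2 * (opNorm X)^2 * (frobSq (Δ * Vh) + (rd : ℝ) * ζ^2 * (opNorm Δ)^2) := by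
        ring
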